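/- The map φ ↦ φ ∧ ⋀_{xᵢ ∈ Vars(φ)} (xᵢ ⊕ yᵢ), with fresh variables yᵢ, is a bijection-inducing (parsimonious) transformation: the models of the resulting formula over Vars(φ) ∪ {yᵢ} are exactly its minimal models (w.r.t. the coordinatewise order), and they are in bijection with the models of φ; hence the number of minimal models of the image equals the number of models of φ. -/

import Mathlib

inductive Fml (V : Type) : Type
  | var : V → Fml V
  | app : (n : ℕ) → ((Fin n → Bool) → Bool) → (Fin n → Fml V) → Fml V

def Fml.eval {V : Type} (σ : V → Bool) : Fml V → Bool
  | .var v => σ v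
  | .app _ f a => f (fun i => (a i).eval σ)

/-- Rename the variables of a formula. -/
def Fml.rename {V W : Type} (h : V → W) : Fml V → Fml W
  | .var v => .var (h v)
  | .app n f a => .app n f (fun i => (a i).rename h)

def trueSet {V : Type} (σ : V → Bool) : Set V := {v | σ v = true}

/-- `σ` is a minimal model of `ψ` w.r.t. the coordinatewise (set-inclusion) order. -/
def IsMinimalModel {V : Type} (ψ : Fml V) (σ : V → Bool) : Prop :=
  ψ.eval σ = true ∧
    ∀ σ' : V → Bool, ψ.eval σ' = true → trueSet σ' ⊆ trueSet σ → trueSet σ' = trueSet σ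

/-- The formula `x_j ⊕ y_j` over variables `Fin n ⊕ Fin n`
(`Sum.inl j` is `x_j`, `Sum.inr j` is `y_j`). -/
def xorPair (n : ℕ) (j : Fin n) : Fml (Fin n ⊕ Fin n) :=
  .app 2 (fun v => xor (v 0) (v 1))
    (fun k => if k = 0 then .var (Sum.inl j) else .var (Sum.inr j))

/-- The image `φ ∧ ⋀_{i} (x_i ⊕ y_i)` of `φ` under the transformation. -/
def parsimoniousImage {n : ℕ} (φ : Fml (Fin n)) : Fml (Fin n ⊕ Fin n) :=
  .app (n + 1) (fun v => decide (∀ i, v i = true))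
    (Fin.cases (φ.rename Sum.inl) (fun j => xorPair n j))

lemma eval_rename {V W : Type} (h : V → W) (φ : Fml V) (σ : W → Bool) :
    (φ.rename h).eval σ = φ.eval (σ ∘ h) := by
  induction φ with
  | var v => rfl
  | app n f a ih => simp [Fml.rename, Fml.eval, ih]

lemma eval_image {n : ℕ} (φ : Fml (Fin n)) (τ : Fin n ⊕ Fin n → Bool) :
    (parsimoniousImage φ).eval τ = true ↔
      (φ.eval (τ ∘ Sum.inl) = true ∧ ∀ j, τ (Sum.inr j) = !τ (Sum.inl j)) := by
  show decide _ = true ↔ _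
  rw [decide_eq_true_iff]
  rw [Fin.forall_fin_succ]
  constructor
  · rintro ⟨h1, h2⟩
    refine ⟨?_, fun j => ?_⟩
    · simpa [eval_rename] using h1
    · have := h2 j
      simp only [Fin.cases_succ, xorPair, Fml.eval, one_ne_zero, if_true, if_false] at this
      revert this
      cases τ (Sum.inl j) <;> cases τ (Sum.inr j) <;> simp
  · rintro ⟨h1, h2⟩
    refine ⟨by simpa [eval_rename] using h1, fun j => ?_⟩
    simp only [Fin.cases_succ, xorPair, Fml.eval, one_ne_zero, if_true, if_false]
    have := h2 j
    revert this
    cases τ (Sum.inl j) <;> cases τ (Sum.inr j) <;> simp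

theorem parsimonious_transformation {n : ℕ} (φ : Fml (Fin n)) :
    (∀ τ : Fin n ⊕ Fin n → Bool,
        (parsimoniousImage φ).eval τ = true ↔ IsMinimalModel (parsimoniousImage φ) τ) ∧
    Nonempty
      ({σ : Fin n → Bool // φ.eval σ = true} ≃
       {τ : Fin n ⊕ Fin n → Bool // (parsimoniousImage φ).eval τ = true}) := by
  constructor
  · intro τ
    constructor
    · intro hτ
      refine ⟨hτ, fun σ' hσ' hsub => ?_⟩
      rw [eval_image] at hτ hσ'
      have key : ∀ v, σ' v = τ v := by
        rintro (j | j)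
        · by_cases h : σ' (Sum.inl j) = true
          · rw [h, (hsub h).symm]
          · simp only [Bool.not_eq_true] at h
            have h2 : σ' (Sum.inr j) = true := by rw [hσ'.2 j, h]; rfl
            have h3 : τ (Sum.inr j) = true := hsub h2
            have : τ (Sum.inl j) = false := by
              have := hτ.2 j; rw [h3] at this
              cases hc : τ (Sum.inl j) <;> simp [hc] at this ⊢
            rw [h, this]
        · by_cases h : σ' (Sum.inr j) = true
          · rw [h, (hsub h).symm]
          · simp only [Bool.not_eq_true] at h
            have h2 : σ' (Sum.inl j) = true := by
              have := hσ'.2 j; rw [h] at this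
              cases hc : σ' (Sum.inl j) <;> simp [hc] at this ⊢
            have h3 : τ (Sum.inl j) = true := hsub h2
            have : τ (Sum.inr j) = false := by rw [hτ.2 j, h3]; rfl
            rw [h, this]
      have : σ' = τ := funext key
      rw [this]
    · exact fun h => h.1
  · refine ⟨{
      toFun := fun ⟨σ, hσ⟩ => ⟨Sum.elim σ (fun j => !σ j), ?_⟩
      invFun := fun ⟨τ, hτ⟩ => ⟨τ ∘ Sum.inl, ((eval_image φ τ).mp hτ).1⟩
      left_inv := ?_
      right_inv := ?_ }⟩
    · rw [eval_image]
      exact ⟨by simpa using hσ, fun j => rfl⟩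
    · rintro ⟨σ, hσ⟩; rfl
    · rintro ⟨τ, hτ⟩
      ext v
      cases v with
      | inl j => rfl
      | inr j => exact (((eval_image φ τ).mp hτ).2 j).symm
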